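/- arXiv:1511.04965 — 2 statements merged into one kernel-verified Lean document; each statement's English description precedes it below -/
import Mathlib

section
/- Let V be a finite-dimensional real inner product space of dimension N, and let f : V → ℝ be positively homogeneous of degree α ≥ 1 and Lipschitz on the unit ball with Lipschitz constant L_f. Then there exists a constant C > 0 depending only on N and α such that for any Λ > 0 and any symmetric positive semidefinite operators A, B on V with ‖A‖ ≤ Λ and ‖B‖ ≤ Λ, the difference of Gaussian expectations satisfies |E_A(f) − E_B(f)| ≤ C L_f Λ^{(α−1)/2} ‖A − B‖^{1/2}. -/
open MeasureTheory
open scoped RealInnerProductSpace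

/-- The standard Gaussian measure on `ℝ^N`. -/
noncomputable def stdGaussian (N : ℕ) : Measure (EuclideanSpace ℝ (Fin N)) :=
  volume.withDensity fun v =>
    ENNReal.ofReal (Real.exp (-‖v‖ ^ 2 / 2) / Real.sqrt ((2 * Real.pi) ^ N))

lemma aux_gauss_integrable (N : ℕ) :
    Integrable (fun v : EuclideanSpace ℝ (Fin N) => Real.exp (-‖v‖ ^ 2 / 4)) := by
  have h := (GaussianFourier.integrable_cexp_neg_mul_sq_norm_add
      (V := EuclideanSpace ℝ (Fin N)) (b := (1/4 : ℂ)) (by norm_num) 0 0).norm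
  refine h.congr (Filter.Eventually.of_forall fun v => ?_)
  simp only [Complex.norm_exp]
  congr 1
  simp [Complex.add_re, Complex.mul_re, Complex.div_re, Complex.normSq,
    ← Complex.ofReal_pow]
  ring

lemma aux_rpow_le_exp (α : ℝ) (hα : 0 ≤ α) (r : ℝ) (hr : 0 ≤ r) :
    r ^ α ≤ ((4:ℝ)^⌈α⌉₊ * (Nat.factorial ⌈α⌉₊) + 1) * Real.exp (r^2/4) := by
  set n := ⌈α⌉₊
  have hexp : (1:ℝ) ≤ Real.exp (r^2/4) := Real.one_le_exp (by positivity)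
  have hK : (1:ℝ) ≤ (4:ℝ)^n * (Nat.factorial n) + 1 := by
    have : (0:ℝ) < (4:ℝ)^n * (Nat.factorial n) := by positivity
    linarith
  rcases le_or_gt r 1 with h1 | h1
  · have : r ^ α ≤ 1 := Real.rpow_le_one hr h1 hα
    nlinarith
  · have h2 : r ^ α ≤ r ^ (n:ℝ) :=
      Real.rpow_le_rpow_of_exponent_le h1.le (Nat.le_ceil α)
    have h3 : r ^ (n:ℝ) = r ^ n := Real.rpow_natCast r n
    have h4 : r ^ n ≤ r ^ (2*n) := pow_le_pow_right₀ h1.le (by omega)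
    have h5 : (r^2/4)^n / (Nat.factorial n) ≤ Real.exp (r^2/4) :=
      Real.pow_div_factorial_le_exp (x := r^2/4) (by positivity) n
    have h6 : (r^2/4)^n = r^(2*n) / 4^n := by rw [div_pow, pow_mul]
    have h7 : r^(2*n) ≤ (4:ℝ)^n * (Nat.factorial n) * Real.exp (r^2/4) := by
      rw [h6, div_div, div_le_iff₀ (by positivity)] at h5
      linarith [h5]
    calc r ^ α ≤ r ^ (2*n) := (h2.trans_eq h3).trans h4
      _ ≤ (4:ℝ)^n * (Nat.factorial n) * Real.exp (r^2/4) := h7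
      _ ≤ _ := by nlinarith

lemma aux_integrable_rpow (N : ℕ) (α : ℝ) (hα : 0 ≤ α) :
    Integrable (fun v : EuclideanSpace ℝ (Fin N) => ‖v‖ ^ α) (stdGaussian N) := by
  have hc : (0:ℝ) < Real.sqrt ((2 * Real.pi) ^ N) := by
    apply Real.sqrt_pos.2; positivity
  set c := Real.sqrt ((2 * Real.pi) ^ N) with hcdef
  have hmeas : Measurable (fun v : EuclideanSpace ℝ (Fin N) =>
      ENNReal.ofReal (Real.exp (-‖v‖ ^ 2 / 2) / c)) := by
    apply Measurable.ennreal_ofReal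
    exact ((Real.continuous_exp.comp (by fun_prop)).div_const c).measurable
  rw [stdGaussian, integrable_withDensity_iff hmeas
    (Filter.Eventually.of_forall fun v => ENNReal.ofReal_lt_top)]
  have heq : (fun v : EuclideanSpace ℝ (Fin N) =>
      ‖v‖ ^ α * (ENNReal.ofReal (Real.exp (-‖v‖ ^ 2 / 2) / c)).toReal)
      = fun v => ‖v‖ ^ α * (Real.exp (-‖v‖ ^ 2 / 2) / c) := by
    funext v
    rw [ENNReal.toReal_ofReal (by positivity)]
  rw [heq]
  set K := (4:ℝ)^⌈α⌉₊ * (Nat.factorial ⌈α⌉₊) + 1 with hKdef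
  have hK : (0:ℝ) < K := by positivity
  apply Integrable.mono' ((aux_gauss_integrable N).const_mul (K / c))
  · apply Continuous.aestronglyMeasurable
    have h1 : Continuous fun v : EuclideanSpace ℝ (Fin N) => ‖v‖ ^ α :=
      continuous_norm.rpow_const fun v => Or.inr hα
    exact h1.mul ((Real.continuous_exp.comp (by fun_prop)).div_const c)
  · refine Filter.Eventually.of_forall fun v => ?_
    have hb := aux_rpow_le_exp α hα ‖v‖ (norm_nonneg v)
    have hex : Real.exp (‖v‖^2/4) * Real.exp (-‖v‖^2/2) = Real.exp (-‖v‖^2/4) := by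
      rw [← Real.exp_add]; ring_nf
    calc ‖‖v‖ ^ α * (Real.exp (-‖v‖ ^ 2 / 2) / c)‖
        = ‖v‖ ^ α * (Real.exp (-‖v‖ ^ 2 / 2) / c) := by
          rw [Real.norm_eq_abs, abs_of_nonneg (by positivity)]
      _ ≤ (K * Real.exp (‖v‖^2/4)) * (Real.exp (-‖v‖ ^ 2 / 2) / c) :=
          mul_le_mul_of_nonneg_right hb (by positivity)
      _ = K / c * Real.exp (-‖v‖ ^ 2 / 4) := by
          field_simp
          rw [← Real.exp_add]; ring_nf

set_option maxHeartbeats 1000000 in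
/-- For `f : ℝ^N → ℝ` positively homogeneous of degree `α ≥ 1` and Lipschitz (with constant
`L_f`) on the unit ball, there is `C > 0` depending only on `N` and `α` such that for all
`Λ > 0` and symmetric positive semidefinite `A, B` with `‖A‖, ‖B‖ ≤ Λ` one has
`|E_A(f) - E_B(f)| ≤ C L_f Λ^{(α-1)/2} ‖A - B‖^{1/2}`, where `E_A(f)` is the integral of `f`
against the centered Gaussian with covariance `A` (the pushforward of the standard Gaussian
under `√A`). -/
theorem gaussian_expectation_holder (N : ℕ) (α : ℝ) (hα : 1 ≤ α) :
    ∃ C > (0 : ℝ), ∀ (f : EuclideanSpace ℝ (Fin N) → ℝ) (Lf : ℝ),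
      (∀ t : ℝ, 0 < t → ∀ v, f (t • v) = t ^ α * f v) →
      (∀ x y : EuclideanSpace ℝ (Fin N), ‖x‖ ≤ 1 → ‖y‖ ≤ 1 → |f x - f y| ≤ Lf * ‖x - y‖) →
      ∀ Λ : ℝ, 0 < Λ →
      ∀ A B sA sB : EuclideanSpace ℝ (Fin N) →L[ℝ] EuclideanSpace ℝ (Fin N),
        IsSelfAdjoint A → IsSelfAdjoint B → IsSelfAdjoint sA → IsSelfAdjoint sB →
        (∀ v, 0 ≤ ⟪sA v, v⟫) → (∀ v, 0 ≤ ⟪sB v, v⟫) →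
        sA ∘L sA = A → sB ∘L sB = B → ‖A‖ ≤ Λ → ‖B‖ ≤ Λ →
        |(∫ v, f (sA v) ∂(stdGaussian N)) - ∫ v, f (sB v) ∂(stdGaussian N)|
          ≤ C * Lf * Λ ^ ((α - 1) / 2) * ‖A - B‖ ^ ((1 : ℝ) / 2) := by
  classical
  set γ := stdGaussian N with hγdef
  have hint : Integrable (fun v : EuclideanSpace ℝ (Fin N) => ‖v‖ ^ α) γ :=
    aux_integrable_rpow N α (by linarith)
  set M := ∫ v, ‖v‖ ^ α ∂γ with hMdef
  have hM0 : 0 ≤ M := integral_nonneg fun v => Real.rpow_nonneg (norm_nonneg v) α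
  refine ⟨M + 1, by linarith, ?_⟩
  intro f Lf hhom hLip Λ hΛ A B sA sB hA hB hsA hsB hsApos hsBpos hA2 hB2 hAΛ hBΛ
  -- trivial case N = 0
  rcases Nat.eq_zero_or_pos N with hN | hN
  · haveI : Subsingleton (EuclideanSpace ℝ (Fin N)) := by
      subst hN; infer_instance
    have hAB : A = B := ContinuousLinearMap.ext fun v => Subsingleton.elim _ _
    have heq : (fun v : EuclideanSpace ℝ (Fin N) => f (sA v)) = fun v => f (sB v) :=
      funext fun v => by rw [Subsingleton.elim (sA v) (sB v)]
    rw [heq, sub_self, abs_zero, hAB, sub_self, norm_zero,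
      Real.zero_rpow (by norm_num), mul_zero]
  -- main case
  have hα1 : (0:ℝ) ≤ α - 1 := by linarith
  have hα0 : (0:ℝ) < α := by linarith
  -- f 0 = 0
  have hf0 : f 0 = 0 := by
    have h := hhom 2 (by norm_num) 0
    rw [smul_zero] at h
    have h2 : (1:ℝ) < 2 ^ α := by
      calc (1:ℝ) < 2 := one_lt_two
        _ = 2 ^ (1:ℝ) := (Real.rpow_one 2).symm
        _ ≤ 2 ^ α := Real.rpow_le_rpow_of_exponent_le one_le_two hα
    nlinarith
  -- Lf is nonnegative
  have hLf : 0 ≤ Lf := by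
    set x : EuclideanSpace ℝ (Fin N) := EuclideanSpace.single (⟨0, hN⟩ : Fin N) (1:ℝ)
    have hx : ‖x‖ = 1 := by simp [x, EuclideanSpace.norm_single]
    have h := hLip x 0 hx.le (by simp)
    rw [sub_zero, hx, mul_one, hf0, sub_zero] at h
    exact (abs_nonneg _).trans h
  -- the homogeneous Lipschitz estimate
  have hr1 : ∀ r : ℝ, 0 ≤ r → r ^ (α - 1) * r = r ^ α := by
    intro r hr
    rcases hr.eq_or_lt with h | h
    · rw [← h, Real.zero_rpow (ne_of_gt hα0), mul_zero]
    · have h2 := Real.rpow_add h (α - 1) 1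
      rw [Real.rpow_one, show α - 1 + 1 = α by ring] at h2
      exact h2.symm
  have key : ∀ x y : EuclideanSpace ℝ (Fin N),
      |f x - f y| ≤ Lf * max ‖x‖ ‖y‖ ^ (α - 1) * ‖x - y‖ := by
    intro x y
    have hR0 : 0 ≤ max ‖x‖ ‖y‖ := le_max_of_le_left (norm_nonneg x)
    rcases hR0.eq_or_lt with hR | hR
    · have hx : x = 0 := norm_eq_zero.1 (le_antisymm (hR ▸ le_max_left _ _) (norm_nonneg x))
      have hy : y = 0 := norm_eq_zero.1 (le_antisymm (hR ▸ le_max_right _ _) (norm_nonneg y))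
      simp [hx, hy]
    · set R := max ‖x‖ ‖y‖ with hRdef
      have hinv : (0:ℝ) < R⁻¹ := inv_pos.2 hR
      have hx1 : ‖R⁻¹ • x‖ ≤ 1 := by
        rw [norm_smul, Real.norm_eq_abs, abs_of_pos hinv]
        rw [inv_mul_le_one₀ hR]
        exact le_max_left _ _
      have hy1 : ‖R⁻¹ • y‖ ≤ 1 := by
        rw [norm_smul, Real.norm_eq_abs, abs_of_pos hinv]
        rw [inv_mul_le_one₀ hR]
        exact le_max_right _ _
      have hfx : f x = R ^ α * f (R⁻¹ • x) := by
        have h := hhom R hR (R⁻¹ • x)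
        rwa [smul_smul, mul_inv_cancel₀ (ne_of_gt hR), one_smul] at h
      have hfy : f y = R ^ α * f (R⁻¹ • y) := by
        have h := hhom R hR (R⁻¹ • y)
        rwa [smul_smul, mul_inv_cancel₀ (ne_of_gt hR), one_smul] at h
      have hRα : (0:ℝ) < R ^ α := Real.rpow_pos_of_pos hR α
      calc |f x - f y| = R ^ α * |f (R⁻¹ • x) - f (R⁻¹ • y)| := by
            rw [hfx, hfy, ← mul_sub, abs_mul, abs_of_pos hRα]
        _ ≤ R ^ α * (Lf * ‖R⁻¹ • x - R⁻¹ • y‖) :=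
            mul_le_mul_of_nonneg_left (hLip _ _ hx1 hy1) hRα.le
        _ = Lf * R ^ (α - 1) * ‖x - y‖ := by
            rw [← smul_sub, norm_smul, Real.norm_eq_abs, abs_of_pos hinv,
              Real.rpow_sub hR, Real.rpow_one]
            field_simp
  have hbound : ∀ x : EuclideanSpace ℝ (Fin N), |f x| ≤ Lf * ‖x‖ ^ α := by
    intro x
    have h := key x 0
    rw [hf0, sub_zero, norm_zero, sub_zero, max_eq_left (norm_nonneg x),
      mul_assoc, hr1 _ (norm_nonneg x)] at h
    exact h
  -- continuity of f
  have hcont : Continuous f := by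
    rw [continuous_iff_continuousAt]
    intro p
    apply continuousAt_of_locally_lipschitz one_pos (|Lf| * (‖p‖ + 1) ^ (α - 1))
    intro x hx
    rw [Real.dist_eq, dist_eq_norm] at *
    have hmax : max ‖x‖ ‖p‖ ≤ ‖p‖ + 1 := by
      have : ‖x‖ ≤ ‖p‖ + ‖x - p‖ := by
        calc ‖x‖ = ‖p + (x - p)‖ := by rw [show p + (x - p) = x from by abel]
          _ ≤ ‖p‖ + ‖x - p‖ := norm_add_le _ _
      refine max_le (by linarith) (by linarith)
    calc |f x - f p| ≤ Lf * max ‖x‖ ‖p‖ ^ (α - 1) * ‖x - p‖ := key x p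
      _ ≤ |Lf| * (‖p‖ + 1) ^ (α - 1) * ‖x - p‖ := by
          apply mul_le_mul_of_nonneg_right _ (norm_nonneg _)
          calc Lf * max ‖x‖ ‖p‖ ^ (α - 1) ≤ |Lf| * max ‖x‖ ‖p‖ ^ (α - 1) :=
              mul_le_mul_of_nonneg_right (le_abs_self Lf)
                (Real.rpow_nonneg (le_max_of_le_left (norm_nonneg x)) _)
            _ ≤ |Lf| * (‖p‖ + 1) ^ (α - 1) :=
              mul_le_mul_of_nonneg_left
                (Real.rpow_le_rpow (le_max_of_le_left (norm_nonneg x)) hmax hα1)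
                (abs_nonneg Lf)
  -- pointwise operator bounds
  have hsq : ∀ (T : EuclideanSpace ℝ (Fin N) →L[ℝ] EuclideanSpace ℝ (Fin N)) (K : ℝ),
      0 ≤ K → (∀ v, ‖T v‖ ^ 2 ≤ K * ‖v‖ ^ 2) → ∀ v, ‖T v‖ ≤ Real.sqrt K * ‖v‖ := by
    intro T K hK h v
    calc ‖T v‖ = Real.sqrt (‖T v‖ ^ 2) := (Real.sqrt_sq (norm_nonneg _)).symm
      _ ≤ Real.sqrt (K * ‖v‖ ^ 2) := Real.sqrt_le_sqrt (h v)
      _ = Real.sqrt K * ‖v‖ := by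
          rw [Real.sqrt_mul hK, Real.sqrt_sq (norm_nonneg _)]
  have hptA : ∀ v, ‖sA v‖ ≤ Real.sqrt Λ * ‖v‖ := by
    apply hsq sA Λ hΛ.le
    intro v
    have h1 : ‖sA v‖ ^ 2 = ⟪A v, v⟫ := by
      rw [← real_inner_self_eq_norm_sq, ← hA2]
      exact (hsA.isSymmetric (sA v) v).symm
    rw [h1]
    calc ⟪A v, v⟫ ≤ ‖A v‖ * ‖v‖ := real_inner_le_norm _ _
      _ ≤ (Λ * ‖v‖) * ‖v‖ :=
          mul_le_mul_of_nonneg_right ((A.le_opNorm v).trans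
            (mul_le_mul_of_nonneg_right hAΛ (norm_nonneg v))) (norm_nonneg v)
      _ = Λ * ‖v‖ ^ 2 := by ring
  have hptB : ∀ v, ‖sB v‖ ≤ Real.sqrt Λ * ‖v‖ := by
    apply hsq sB Λ hΛ.le
    intro v
    have h1 : ‖sB v‖ ^ 2 = ⟪B v, v⟫ := by
      rw [← real_inner_self_eq_norm_sq, ← hB2]
      exact (hsB.isSymmetric (sB v) v).symm
    rw [h1]
    calc ⟪B v, v⟫ ≤ ‖B v‖ * ‖v‖ := real_inner_le_norm _ _
      _ ≤ (Λ * ‖v‖) * ‖v‖ :=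
          mul_le_mul_of_nonneg_right ((B.le_opNorm v).trans
            (mul_le_mul_of_nonneg_right hBΛ (norm_nonneg v))) (norm_nonneg v)
      _ = Λ * ‖v‖ ^ 2 := by ring
  -- the square-root Hölder bound  ‖sA v - sB v‖ ≤ √‖A-B‖ ‖v‖
  have hsym : LinearMap.IsSymmetric
      ((sA - sB : EuclideanSpace ℝ (Fin N) →L[ℝ] EuclideanSpace ℝ (Fin N)) :
        EuclideanSpace ℝ (Fin N) →ₗ[ℝ] EuclideanSpace ℝ (Fin N)) := by
    intro x y
    have h1 := hsA.isSymmetric x y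
    have h2 := hsB.isSymmetric x y
    simp only [ContinuousLinearMap.coe_coe] at h1 h2
    simp only [ContinuousLinearMap.coe_coe, ContinuousLinearMap.sub_apply,
      inner_sub_left, inner_sub_right, h1, h2]
  have hn : Module.finrank ℝ (EuclideanSpace ℝ (Fin N)) = N := finrank_euclideanSpace_fin
  set b := hsym.eigenvectorBasis hn with hbdef
  set μ := hsym.eigenvalues hn with hμdef
  have claim1 : ∀ i, (μ i) ^ 2 ≤ ‖A - B‖ := by
    intro i
    set e := b i with hedef
    have he : ‖e‖ = 1 := b.orthonormal.1 i
    have heig : sA e - sB e = μ i • e := by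
      have h := hsym.apply_eigenvectorBasis hn i
      simpa [← hμdef, ← hbdef, ← hedef] using h
    have ha : 0 ≤ ⟪sA e, e⟫ := hsApos e
    have hb' : 0 ≤ ⟪sB e, e⟫ := hsBpos e
    have hμeq : μ i = ⟪sA e, e⟫ - ⟪sB e, e⟫ := by
      have h1 : ⟪sA e - sB e, e⟫ = μ i := by
        rw [heig, real_inner_smul_left, real_inner_self_eq_norm_sq, he]
        ring
      rw [← h1, inner_sub_left]
    have hABe : ⟪(A - B) e, e⟫ = μ i * (⟪sA e, e⟫ + ⟪sB e, e⟫) := by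
      have h1 : (A - B) e = sA (sA e) - sB (sB e) := by
        rw [← hA2, ← hB2]; rfl
      have h2 : ⟪sA (sA e), e⟫ = ⟪sA e, sA e⟫ := hsA.isSymmetric (sA e) e
      have h3 : ⟪sB (sB e), e⟫ = ⟪sB e, sB e⟫ := hsB.isSymmetric (sB e) e
      have h4 : ⟪sA e, sA e⟫ - ⟪sB e, sB e⟫ = ⟪sA e + sB e, sA e - sB e⟫ := by
        rw [inner_add_left, inner_sub_right, inner_sub_right]
        rw [real_inner_comm (sB e) (sA e)]
        ring
      rw [h1, inner_sub_left, h2, h3, h4, heig, real_inner_smul_right,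
        inner_add_left]
    have habs : |μ i| ≤ ⟪sA e, e⟫ + ⟪sB e, e⟫ := by
      rw [abs_le]; constructor <;> [linarith [hμeq.le, hμeq.ge]; linarith [hμeq.le, hμeq.ge]]
    have hCS : |⟪(A - B) e, e⟫| ≤ ‖A - B‖ := by
      calc |⟪(A - B) e, e⟫| ≤ ‖(A - B) e‖ * ‖e‖ := abs_real_inner_le_norm _ _
        _ ≤ (‖A - B‖ * ‖e‖) * ‖e‖ :=
            mul_le_mul_of_nonneg_right ((A - B).le_opNorm e) (norm_nonneg e)
        _ = ‖A - B‖ := by rw [he]; ring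
    calc (μ i) ^ 2 = |μ i| * |μ i| := by rw [← abs_mul, abs_mul_self]; ring
      _ ≤ |μ i| * (⟪sA e, e⟫ + ⟪sB e, e⟫) :=
          mul_le_mul_of_nonneg_left habs (abs_nonneg _)
      _ = |μ i * (⟪sA e, e⟫ + ⟪sB e, e⟫)| := by
          rw [abs_mul, abs_of_nonneg (by linarith : (0:ℝ) ≤ ⟪sA e, e⟫ + ⟪sB e, e⟫)]
      _ = |⟪(A - B) e, e⟫| := by rw [hABe]
      _ ≤ ‖A - B‖ := hCS
  have claim2 : ∀ v, ‖sA v - sB v‖ ≤ Real.sqrt ‖A - B‖ * ‖v‖ := by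
    have h := hsq (sA - sB) ‖A - B‖ (norm_nonneg _) ?_
    · intro v
      have h' := h v
      rw [ContinuousLinearMap.sub_apply] at h'
      exact h'
    · intro v
      have e1 : ∀ x : EuclideanSpace ℝ (Fin N), ‖x‖ ^ 2 = ∑ i, (b.repr x i) ^ 2 := by
        intro x
        rw [← b.repr.norm_map x, EuclideanSpace.norm_eq,
          Real.sq_sqrt (Finset.sum_nonneg fun i _ => by positivity)]
        simp [sq_abs]
      have e2 : ∀ i, b.repr ((sA - sB) v) i = μ i * b.repr v i := by
        intro i
        exact hsym.eigenvectorBasis_apply_self_apply hn v i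
      rw [e1, e1 v, Finset.mul_sum]
      apply Finset.sum_le_sum
      intro i _
      rw [e2 i, mul_pow]
      have := claim1 i
      nlinarith [sq_nonneg (b.repr v i), sq_nonneg (μ i)]
  -- pointwise bound on the difference
  set P := Λ ^ ((α - 1) / 2) with hPdef
  set Q := ‖A - B‖ ^ ((1:ℝ) / 2) with hQdef
  have hP0 : 0 ≤ P := Real.rpow_nonneg hΛ.le _
  have hQ0 : 0 ≤ Q := Real.rpow_nonneg (norm_nonneg _) _
  have pt : ∀ v, |f (sA v) - f (sB v)| ≤ (Lf * P * Q) * ‖v‖ ^ α := by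
    intro v
    have hmax : max ‖sA v‖ ‖sB v‖ ≤ Real.sqrt Λ * ‖v‖ := max_le (hptA v) (hptB v)
    have hmax0 : 0 ≤ max ‖sA v‖ ‖sB v‖ := le_max_of_le_left (norm_nonneg _)
    have e1 : (Real.sqrt Λ * ‖v‖) ^ (α - 1) = P * ‖v‖ ^ (α - 1) := by
      rw [Real.mul_rpow (Real.sqrt_nonneg _) (norm_nonneg _), Real.sqrt_eq_rpow,
        ← Real.rpow_mul hΛ.le, show 1 / 2 * (α - 1) = (α - 1) / 2 by ring]
    have e2 : Real.sqrt ‖A - B‖ = Q := Real.sqrt_eq_rpow _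
    calc |f (sA v) - f (sB v)|
        ≤ Lf * max ‖sA v‖ ‖sB v‖ ^ (α - 1) * ‖sA v - sB v‖ := key (sA v) (sB v)
      _ ≤ Lf * (Real.sqrt Λ * ‖v‖) ^ (α - 1) * (Real.sqrt ‖A - B‖ * ‖v‖) := by
          apply mul_le_mul
          · exact mul_le_mul_of_nonneg_left
              (Real.rpow_le_rpow hmax0 hmax hα1) hLf
          · exact claim2 v
          · exact norm_nonneg _
          · positivity
      _ = (Lf * P * Q) * ‖v‖ ^ α := by
          rw [e1, e2, ← hr1 ‖v‖ (norm_nonneg v)]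
          ring
  -- integrability of the composites
  have hintA : Integrable (fun v => f (sA v)) γ := by
    apply Integrable.mono' (hint.const_mul (Lf * Real.sqrt Λ ^ α))
    · exact (hcont.comp sA.continuous).aestronglyMeasurable
    · refine Filter.Eventually.of_forall fun v => ?_
      rw [Real.norm_eq_abs]
      calc |f (sA v)| ≤ Lf * ‖sA v‖ ^ α := hbound _
        _ ≤ Lf * (Real.sqrt Λ * ‖v‖) ^ α :=
            mul_le_mul_of_nonneg_left
              (Real.rpow_le_rpow (norm_nonneg _) (hptA v) hα0.le) hLf
        _ = Lf * Real.sqrt Λ ^ α * ‖v‖ ^ α := by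
            rw [Real.mul_rpow (Real.sqrt_nonneg _) (norm_nonneg _)]; ring
  have hintB : Integrable (fun v => f (sB v)) γ := by
    apply Integrable.mono' (hint.const_mul (Lf * Real.sqrt Λ ^ α))
    · exact (hcont.comp sB.continuous).aestronglyMeasurable
    · refine Filter.Eventually.of_forall fun v => ?_
      rw [Real.norm_eq_abs]
      calc |f (sB v)| ≤ Lf * ‖sB v‖ ^ α := hbound _
        _ ≤ Lf * (Real.sqrt Λ * ‖v‖) ^ α :=
            mul_le_mul_of_nonneg_left
              (Real.rpow_le_rpow (norm_nonneg _) (hptB v) hα0.le) hLf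
        _ = Lf * Real.sqrt Λ ^ α * ‖v‖ ^ α := by
            rw [Real.mul_rpow (Real.sqrt_nonneg _) (norm_nonneg _)]; ring
  -- conclusion
  rw [← integral_sub hintA hintB]
  calc |∫ v, (f (sA v) - f (sB v)) ∂γ|
      ≤ ∫ v, |f (sA v) - f (sB v)| ∂γ := by
        simpa [Real.norm_eq_abs] using
          norm_integral_le_integral_norm (μ := γ) (fun v => f (sA v) - f (sB v))
    _ ≤ ∫ v, (Lf * P * Q) * ‖v‖ ^ α ∂γ :=
        integral_mono (hintA.sub hintB).abs (hint.const_mul _) pt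
    _ = (Lf * P * Q) * M := by rw [integral_const_mul]
    _ ≤ (M + 1) * Lf * P * Q := by nlinarith [mul_nonneg (mul_nonneg hLf hP0) hQ0]
end

section
/- Let A and B be symmetric positive semidefinite operators on a finite-dimensional real inner product space V, both of operator norm at most 1. Then for the standard Gaussian measure γ_1 on V and any function f : V → ℝ that is positively homogeneous of degree α ≥ 1 and L-Lipschitz on the unit ball, one has ∫ |f(√A v) − f(√B v)| dγ_1(v) ≤ L ‖√A − √B‖ ∫ |v|^α dγ_1(v). -/
open MeasureTheory
open scoped RealInnerProductSpace
open Filter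

lemma aux_norm_le_one {N : ℕ} (A sA : EuclideanSpace ℝ (Fin N) →L[ℝ] EuclideanSpace ℝ (Fin N))
    (hsAsa : IsSelfAdjoint sA) (hsqA : sA ∘L sA = A) (hA : ‖A‖ ≤ 1) : ‖sA‖ ≤ 1 := by
  have h1 : ContinuousLinearMap.adjoint sA = sA :=
    (ContinuousLinearMap.isSelfAdjoint_iff').mp hsAsa
  have h2 : ‖sA‖ * ‖sA‖ = ‖A‖ := by
    rw [← hsqA, ← ContinuousLinearMap.norm_adjoint_comp_self sA, h1]
  nlinarith [norm_nonneg sA]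

lemma aux_integrable {N : ℕ} (α : ℝ) (hα : 1 ≤ α) :
    Integrable (fun v => ‖v‖ ^ α) (stdGaussian N) := by
  rw [stdGaussian, integrable_withDensity_iff]
  · have hmaj : Integrable (fun v : EuclideanSpace ℝ (Fin N) =>
        (Real.exp (α ^ 2) / Real.sqrt ((2 * Real.pi) ^ N)) * Real.exp (-(1/4) * ‖v‖ ^ 2)) := by
      have h := (GaussianFourier.integrable_cexp_neg_mul_sq_norm_add
        (V := EuclideanSpace ℝ (Fin N)) (b := (1/4 : ℂ)) (by norm_num) 0 0).norm
      have h2 : Integrable (fun v : EuclideanSpace ℝ (Fin N) =>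
          Real.exp (-(1/4) * ‖v‖ ^ 2)) := by
        refine h.congr (Eventually.of_forall fun v => ?_)
        simp only [Complex.norm_exp, ← Complex.ofReal_pow,
          Complex.add_re, Complex.mul_re, Complex.neg_re, Complex.ofReal_re, Complex.ofReal_im,
          Complex.zero_re]
        norm_num
      exact h2.const_mul _
    have hreal : Integrable (fun v : EuclideanSpace ℝ (Fin N) =>
        ‖v‖ ^ α * (Real.exp (-‖v‖ ^ 2 / 2) / Real.sqrt ((2 * Real.pi) ^ N))) := by
      refine hmaj.mono ?_ (Eventually.of_forall fun v => ?_)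
      · refine Continuous.aestronglyMeasurable ?_
        apply (continuous_norm.rpow_const (fun x => Or.inr (by linarith))).mul
        exact ((((continuous_norm.pow 2).neg).div_const 2).rexp).div_const _
      · have hc : 0 < Real.sqrt ((2 * Real.pi) ^ N) := by positivity
        have h0 : (0:ℝ) ≤ ‖v‖ ^ α := Real.rpow_nonneg (norm_nonneg _) _
        rw [Real.norm_of_nonneg (by positivity), Real.norm_of_nonneg (by positivity)]
        have key : ‖v‖ ^ α ≤ Real.exp (α ^ 2 + ‖v‖ ^ 2 / 4) := by
          have h1 : ‖v‖ ^ α ≤ Real.exp (α * ‖v‖) := by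
            rcases eq_or_lt_of_le (norm_nonneg v) with h | h
            · rw [← h, Real.zero_rpow (by linarith)]
              positivity
            · rw [Real.rpow_def_of_pos h]
              apply Real.exp_le_exp.mpr
              have hlog : Real.log ‖v‖ ≤ ‖v‖ := (Real.log_le_sub_one_of_pos h).trans (by linarith)
              nlinarith [Real.log_le_sub_one_of_pos h]
          refine h1.trans (Real.exp_le_exp.mpr ?_)
          nlinarith [sq_nonneg (α - ‖v‖ / 2)]
        calc ‖v‖ ^ α * (Real.exp (-‖v‖ ^ 2 / 2) / Real.sqrt ((2 * Real.pi) ^ N))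
            ≤ Real.exp (α ^ 2 + ‖v‖ ^ 2 / 4) * (Real.exp (-‖v‖ ^ 2 / 2) / Real.sqrt ((2 * Real.pi) ^ N)) := by
              apply mul_le_mul_of_nonneg_right key (by positivity)
          _ = Real.exp (α ^ 2) / Real.sqrt ((2 * Real.pi) ^ N) * Real.exp (-(1/4) * ‖v‖ ^ 2) := by
              rw [mul_div_assoc', div_mul_eq_mul_div, ← Real.exp_add, ← Real.exp_add]
              ring_nf
    exact hreal.congr (Eventually.of_forall fun v => by
      simp only [ENNReal.toReal_ofReal (by positivity :
        (0:ℝ) ≤ Real.exp (-‖v‖ ^ 2 / 2) / Real.sqrt ((2 * Real.pi) ^ N))])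
  · exact (((measurable_norm.pow_const 2).neg.div_const 2).exp.div_const _).ennreal_ofReal
  · exact Eventually.of_forall fun v => ENNReal.ofReal_lt_top

/-- For symmetric positive semidefinite `A, B` of operator norm at most `1` (with square
roots `sA, sB`), and `f` positively homogeneous of degree `α ≥ 1` and `L`-Lipschitz on the
unit ball, `∫ |f(√A v) - f(√B v)| dγ₁(v) ≤ L ‖√A - √B‖ ∫ ‖v‖^α dγ₁(v)`. -/
theorem gaussian_sqrt_lipschitz_bound (N : ℕ) (α L : ℝ) (hα : 1 ≤ α)
    (f : EuclideanSpace ℝ (Fin N) → ℝ)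
    (hhom : ∀ t : ℝ, 0 < t → ∀ v, f (t • v) = t ^ α * f v)
    (hlip : ∀ x y : EuclideanSpace ℝ (Fin N), ‖x‖ ≤ 1 → ‖y‖ ≤ 1 →
      |f x - f y| ≤ L * ‖x - y‖)
    (A B sA sB : EuclideanSpace ℝ (Fin N) →L[ℝ] EuclideanSpace ℝ (Fin N))
    (hAsa : IsSelfAdjoint A) (hBsa : IsSelfAdjoint B)
    (hsAsa : IsSelfAdjoint sA) (hsBsa : IsSelfAdjoint sB)
    (hsApos : ∀ v, 0 ≤ ⟪sA v, v⟫) (hsBpos : ∀ v, 0 ≤ ⟪sB v, v⟫)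
    (hsqA : sA ∘L sA = A) (hsqB : sB ∘L sB = B)
    (hA : ‖A‖ ≤ 1) (hB : ‖B‖ ≤ 1) :
    (∫ v, |f (sA v) - f (sB v)| ∂(stdGaussian N))
      ≤ L * ‖sA - sB‖ * ∫ v, ‖v‖ ^ α ∂(stdGaussian N) := by
  have hnA : ‖sA‖ ≤ 1 := aux_norm_le_one A sA hsAsa hsqA hA
  have hnB : ‖sB‖ ≤ 1 := aux_norm_le_one B sB hsBsa hsqB hB
  have hpt : ∀ v : EuclideanSpace ℝ (Fin N),
      |f (sA v) - f (sB v)| ≤ L * ‖sA - sB‖ * ‖v‖ ^ α := by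
    intro v
    rcases eq_or_ne v 0 with rfl | hv
    · rw [map_zero, map_zero, sub_self, abs_zero, norm_zero,
        Real.zero_rpow (by linarith : α ≠ 0), mul_zero]
    · have ht : (0:ℝ) < ‖v‖ := norm_pos_iff.mpr hv
      set u : EuclideanSpace ℝ (Fin N) := ‖v‖⁻¹ • v with hu
      have hnu : ‖u‖ = 1 := by
        rw [hu, norm_smul, norm_inv, norm_norm, inv_mul_cancel₀ ht.ne']
      have hL : 0 ≤ L := by
        have := hlip u 0 hnu.le (by simp)
        have h1 : ‖u - 0‖ = 1 := by simpa using hnu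
        rw [h1, mul_one] at this
        exact (abs_nonneg _).trans this
      have hvu : v = ‖v‖ • u := by
        rw [hu, smul_smul, mul_inv_cancel₀ ht.ne', one_smul]
      have hfA : f (sA v) = ‖v‖ ^ α * f (sA u) := by
        have h := hhom ‖v‖ ht (sA u)
        rw [← sA.map_smul, ← hvu] at h
        exact h
      have hfB : f (sB v) = ‖v‖ ^ α * f (sB u) := by
        have h := hhom ‖v‖ ht (sB u)
        rw [← sB.map_smul, ← hvu] at h
        exact h
      have hAu : ‖sA u‖ ≤ 1 := by
        calc ‖sA u‖ ≤ ‖sA‖ * ‖u‖ := sA.le_opNorm u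
          _ ≤ 1 := by rw [hnu, mul_one]; exact hnA
      have hBu : ‖sB u‖ ≤ 1 := by
        calc ‖sB u‖ ≤ ‖sB‖ * ‖u‖ := sB.le_opNorm u
          _ ≤ 1 := by rw [hnu, mul_one]; exact hnB
      have hdiff : ‖sA u - sB u‖ ≤ ‖sA - sB‖ := by
        calc ‖sA u - sB u‖ = ‖(sA - sB) u‖ := by simp
          _ ≤ ‖sA - sB‖ * ‖u‖ := (sA - sB).le_opNorm u
          _ = ‖sA - sB‖ := by rw [hnu, mul_one]
      have hrp : (0:ℝ) ≤ ‖v‖ ^ α := Real.rpow_nonneg (norm_nonneg _) _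
      calc |f (sA v) - f (sB v)| = ‖v‖ ^ α * |f (sA u) - f (sB u)| := by
            rw [hfA, hfB, ← mul_sub, abs_mul, abs_of_nonneg hrp]
        _ ≤ ‖v‖ ^ α * (L * ‖sA - sB‖) := by
            refine mul_le_mul_of_nonneg_left ?_ hrp
            exact (hlip _ _ hAu hBu).trans (mul_le_mul_of_nonneg_left hdiff hL)
        _ = L * ‖sA - sB‖ * ‖v‖ ^ α := by ring
  have hint : Integrable (fun v => L * ‖sA - sB‖ * ‖v‖ ^ α) (stdGaussian N) :=
    (aux_integrable α hα).const_mul _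
  calc (∫ v, |f (sA v) - f (sB v)| ∂(stdGaussian N))
      ≤ ∫ v, L * ‖sA - sB‖ * ‖v‖ ^ α ∂(stdGaussian N) :=
        integral_mono_of_nonneg (Eventually.of_forall fun v => abs_nonneg _) hint
          (Eventually.of_forall hpt)
    _ = L * ‖sA - sB‖ * ∫ v, ‖v‖ ^ α ∂(stdGaussian N) := integral_const_mul _ _
end
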